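/- Let R be a discrete valuation ring with fraction field K of characteristic p, uniformizer \pi. Let i_1,i_2,i_3 \ge 0 be integers and \mu,\alpha,\beta \in K satisfy \nu(\mu^p-\mu)\ge i_2 - pi_1, \nu((\alpha^p-\alpha)+(\mu^p-\mu)\beta)\ge i_3 - pi_1, \nu(\beta^p-\beta)\ge i_3 - pi_2. Then in K[\xi_1,\xi_2,\xi_3]/(\xi_1^p-\xi_1, \xi_2^p-\xi_2, \xi_3^p-\xi_3), the R-subalgebra generated by u_1=\pi^{i_1}(\xi_1-\mu\xi_2-\alpha\xi_3), u_2=\pi^{i_2}(\xi_2-\beta\xi_3), u_3=\pi^{i_3}\xi_3 is finitely generated as an R-module; specifically each u_k satisfies a monic polynomial of degree p over the R-subalgebra generated by u_{k+1},\dots,u_3. -/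

import Mathlib

open MvPolynomial

set_option maxHeartbeats 2000000
set_option synthInstance.maxHeartbeats 400000


private lemma stmt12_aux {p : ℕ} (hp : p.Prime) {S : Type*} [CommRing S] [Nontrivial S]
    (g : Polynomial S) (hg : g.degree ≤ 1) :
    (Polynomial.X ^ p - g).Monic ∧ (Polynomial.X ^ p - g).natDegree = p := by
  have hlt : g.degree < (p : WithBot ℕ) := lt_of_le_of_lt hg (by exact_mod_cast hp.one_lt)
  constructor
  · exact Polynomial.monic_X_pow_sub hlt
  · rw [Polynomial.natDegree_sub_eq_left_of_natDegree_lt, Polynomial.natDegree_X_pow]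
    rw [Polynomial.natDegree_X_pow]
    exact lt_of_le_of_lt (Polynomial.natDegree_le_of_degree_le hg) hp.one_lt

/-- in `K[ξ₁,ξ₂,ξ₃]/(ξᵢ^p - ξᵢ)`, the
`R`-subalgebra generated by `u₁ = π^{i₁}(ξ₁-μξ₂-αξ₃)`, `u₂ = π^{i₂}(ξ₂-βξ₃)`,
`u₃ = π^{i₃}ξ₃` is finitely generated as an `R`-module, and each `u_k` satisfies a
monic polynomial of degree `p` over the `R`-subalgebra generated by the later
generators. Here `R` is the valuation ring of `K` (the image of `R` in `K` is
exactly `{x : ν x ≥ 0}`). -/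
theorem stmt_12 (p : ℕ) (hp : p.Prime) {K : Type*} [Field K] [CharP K p]
    {R : Type*} [CommRing R] [Algebra R K]
    (ν : K → WithTop ℤ)
    (hmul : ∀ x y : K, ν (x * y) = ν x + ν y)
    (hadd : ∀ x y : K, min (ν x) (ν y) ≤ ν (x + y))
    (hzero : ∀ x : K, ν x = ⊤ ↔ x = 0)
    (π : K) (hπ : ν π = (1 : ℤ))
    (hR : ∀ x : K, (∃ r : R, algebraMap R K r = x) ↔ (0 : WithTop ℤ) ≤ ν x)
    (i₁ i₂ i₃ : ℤ) (hi₁ : 0 ≤ i₁) (hi₂ : 0 ≤ i₂) (hi₃ : 0 ≤ i₃)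
    (μ α β : K)
    (hμ : ((i₂ - p * i₁ : ℤ) : WithTop ℤ) ≤ ν (μ ^ p - μ))
    (hαβ : ((i₃ - p * i₁ : ℤ) : WithTop ℤ) ≤ ν ((α ^ p - α) + (μ ^ p - μ) * β))
    (hβ : ((i₃ - p * i₂ : ℤ) : WithTop ℤ) ≤ ν (β ^ p - β)) :
    let A := MvPolynomial (Fin 3) K ⧸
      (Ideal.span {X 0 ^ p - X 0, X 1 ^ p - X 1, X 2 ^ p - X 2} :
        Ideal (MvPolynomial (Fin 3) K))
    let q := Ideal.Quotient.mk (Ideal.span {X 0 ^ p - X 0, X 1 ^ p - X 1, X 2 ^ p - X 2} :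
        Ideal (MvPolynomial (Fin 3) K))
    let ξ₁ : A := q (X 0)
    let ξ₂ : A := q (X 1)
    let ξ₃ : A := q (X 2)
    let u₁ : A := π ^ i₁ • (ξ₁ - μ • ξ₂ - α • ξ₃)
    let u₂ : A := π ^ i₂ • (ξ₂ - β • ξ₃)
    let u₃ : A := π ^ i₃ • ξ₃
    (Subalgebra.toSubmodule (Algebra.adjoin R {u₁, u₂, u₃})).FG ∧
      (∃ f : Polynomial (Algebra.adjoin R ({u₂, u₃} : Set A)),
        f.Monic ∧ f.natDegree = p ∧ Polynomial.aeval u₁ f = 0) ∧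
      (∃ f : Polynomial (Algebra.adjoin R ({u₃} : Set A)),
        f.Monic ∧ f.natDegree = p ∧ Polynomial.aeval u₂ f = 0) ∧
      (∃ f : Polynomial R, f.Monic ∧ f.natDegree = p ∧ Polynomial.aeval u₃ f = 0) := by
  intro A q ξ₁ ξ₂ ξ₃ u₁ u₂ u₃
  haveI : Fact p.Prime := ⟨hp⟩
  -- π ≠ 0
  have hπ0 : π ≠ 0 := by
    intro h
    have : ν π = ⊤ := (hzero π).mpr h
    rw [hπ] at this
    exact (WithTop.coe_ne_top) this
  -- ν 1 = 0
  have hν1 : ν (1 : K) = 0 := by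
    have h := hmul 1 1
    rw [mul_one] at h
    have hne : ν (1 : K) ≠ ⊤ := fun hh => one_ne_zero ((hzero 1).mp hh)
    obtain ⟨a, ha⟩ := WithTop.ne_top_iff_exists.mp hne
    rw [← ha] at h ⊢
    have h' : a = a + a := by exact_mod_cast h
    have h0 : a = 0 := by omega
    exact_mod_cast congrArg (fun z : ℤ => (z : WithTop ℤ)) h0
  -- ν π⁻¹ = -1
  have hνinv : ν π⁻¹ = ((-1 : ℤ) : WithTop ℤ) := by
    have h := hmul π π⁻¹
    rw [mul_inv_cancel₀ hπ0, hν1, hπ] at h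
    have hne : ν π⁻¹ ≠ ⊤ := fun hh => inv_ne_zero hπ0 ((hzero _).mp hh)
    obtain ⟨a, ha⟩ := WithTop.ne_top_iff_exists.mp hne
    rw [← ha] at h ⊢
    have h' : (0 : ℤ) = 1 + a := by exact_mod_cast h
    have h0 : a = -1 := by omega
    exact_mod_cast congrArg (fun z : ℤ => (z : WithTop ℤ)) h0
  -- ν (π ^ n) = n
  have hνz : ∀ n : ℤ, ν (π ^ n) = (n : WithTop ℤ) := by
    intro n
    induction n using Int.induction_on with
    | zero => rw [zpow_zero, hν1]; rfl
    | succ k ih =>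
      rw [zpow_add_one₀ hπ0, hmul, ih, hπ]
      push_cast
      rfl
    | pred k ih =>
      rw [zpow_sub_one₀ hπ0, hmul, ih, hνinv]
      push_cast
      rfl
  -- nonnegativity of the key scalars
  have hple : (0 : ℤ) ≤ (p : ℤ) - 1 := by
    have := hp.two_le
    omega
  have h0a : ∀ i : ℤ, 0 ≤ i → (0 : WithTop ℤ) ≤ ν (π ^ (((p : ℤ) - 1) * i)) := by
    intro i hi
    rw [hνz]
    exact_mod_cast mul_nonneg hple hi
  have hcomb : ∀ (x : K) (m n : ℤ), ((m : WithTop ℤ) ≤ ν x) → m + n = 0 →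
      (0 : WithTop ℤ) ≤ ν (x * π ^ n) := by
    intro x m n hx hmn
    rw [hmul, hνz]
    calc (0 : WithTop ℤ) = ((m : WithTop ℤ) + (n : WithTop ℤ)) := by
          rw [← WithTop.coe_add, hmn]; rfl
      _ ≤ ν x + (n : WithTop ℤ) := add_le_add_left hx _
  -- elements of R
  obtain ⟨ra₁, hra₁⟩ := (hR (π ^ (((p : ℤ) - 1) * i₁))).mpr (h0a i₁ hi₁)
  obtain ⟨ra₂, hra₂⟩ := (hR (π ^ (((p : ℤ) - 1) * i₂))).mpr (h0a i₂ hi₂)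
  obtain ⟨ra₃, hra₃⟩ := (hR (π ^ (((p : ℤ) - 1) * i₃))).mpr (h0a i₃ hi₃)
  obtain ⟨rb₁, hrb₁⟩ := (hR ((μ ^ p - μ) * π ^ ((p : ℤ) * i₁ - i₂))).mpr
    (hcomb _ (i₂ - p * i₁) _ hμ (by ring))
  obtain ⟨rc₁, hrc₁⟩ := (hR (((α ^ p - α) + (μ ^ p - μ) * β) * π ^ ((p : ℤ) * i₁ - i₃))).mpr
    (hcomb _ (i₃ - p * i₁) _ hαβ (by ring))
  obtain ⟨rb₂, hrb₂⟩ := (hR ((β ^ p - β) * π ^ ((p : ℤ) * i₂ - i₃))).mpr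
    (hcomb _ (i₃ - p * i₂) _ hβ (by ring))
  -- the quotient ring is nontrivial of characteristic p
  have hItop : (Ideal.span {X 0 ^ p - X 0, X 1 ^ p - X 1, X 2 ^ p - X 2} :
      Ideal (MvPolynomial (Fin 3) K)) ≠ ⊤ := by
    rw [Ideal.ne_top_iff_one]
    intro h1
    have hle : (Ideal.span {X 0 ^ p - X 0, X 1 ^ p - X 1, X 2 ^ p - X 2} :
        Ideal (MvPolynomial (Fin 3) K)) ≤
        RingHom.ker (MvPolynomial.aeval (fun _ : Fin 3 => (0 : K))).toRingHom := by
      rw [Ideal.span_le]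
      rintro x hx
      simp only [Set.mem_insert_iff, Set.mem_singleton_iff] at hx
      rcases hx with rfl | rfl | rfl <;>
        simp [RingHom.mem_ker, zero_pow hp.ne_zero]
    have := hle h1
    simp [RingHom.mem_ker] at this
  haveI : Nontrivial A := Ideal.Quotient.nontrivial_iff.mpr hItop
  haveI : CharP A p := charP_of_injective_algebraMap (algebraMap K A).injective p
  -- the ξ's are fixed by the p-th power map
  have hx1 : ξ₁ ^ p = ξ₁ := by
    show q (X 0) ^ p = q (X 0)
    rw [← map_pow, Ideal.Quotient.eq]
    exact Ideal.subset_span (by simp)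
  have hx2 : ξ₂ ^ p = ξ₂ := by
    show q (X 1) ^ p = q (X 1)
    rw [← map_pow, Ideal.Quotient.eq]
    exact Ideal.subset_span (by simp)
  have hx3 : ξ₃ ^ p = ξ₃ := by
    show q (X 2) ^ p = q (X 2)
    rw [← map_pow, Ideal.Quotient.eq]
    exact Ideal.subset_span (by simp)
  have hzp : ∀ m : ℤ, (π ^ m) ^ p = π ^ (m * (p : ℤ)) := by
    intro m
    rw [← zpow_natCast (π ^ m) p, ← zpow_mul]
  -- the three key identities
  have key3 : u₃ ^ p = (π ^ (((p : ℤ) - 1) * i₃)) • u₃ := by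
    have e3 : i₃ * (p : ℤ) = ((p : ℤ) - 1) * i₃ + i₃ := by ring
    calc u₃ ^ p = (π ^ i₃) ^ p • ξ₃ ^ p := smul_pow _ _ _
      _ = π ^ (i₃ * (p : ℤ)) • ξ₃ := by rw [hzp, hx3]
      _ = (π ^ (((p : ℤ) - 1) * i₃) * π ^ i₃) • ξ₃ := by rw [e3, zpow_add₀ hπ0]
      _ = π ^ (((p : ℤ) - 1) * i₃) • u₃ := by rw [mul_smul]
  have key2 : u₂ ^ p = (π ^ (((p : ℤ) - 1) * i₂)) • u₂ -
      ((β ^ p - β) * π ^ ((p : ℤ) * i₂ - i₃)) • u₃ := by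
    have e1 : i₂ * (p : ℤ) = ((p : ℤ) - 1) * i₂ + i₂ := by ring
    have e2 : i₂ * (p : ℤ) = ((p : ℤ) * i₂ - i₃) + i₃ := by ring
    have h1 : u₂ ^ p = π ^ (i₂ * (p : ℤ)) • (ξ₂ - (β ^ p) • ξ₃) := by
      calc u₂ ^ p = (π ^ i₂) ^ p • (ξ₂ - β • ξ₃) ^ p := smul_pow _ _ _
        _ = π ^ (i₂ * (p : ℤ)) • (ξ₂ - (β ^ p) • ξ₃) := by
            rw [hzp, sub_pow_char, smul_pow, hx2, hx3]
    have h2 : (π ^ (((p : ℤ) - 1) * i₂)) • u₂ = π ^ (i₂ * (p : ℤ)) • (ξ₂ - β • ξ₃) := by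
      show (π ^ (((p : ℤ) - 1) * i₂)) • (π ^ i₂ • (ξ₂ - β • ξ₃)) = _
      rw [smul_smul, ← zpow_add₀ hπ0, ← e1]
    have h3 : ((β ^ p - β) * π ^ ((p : ℤ) * i₂ - i₃)) • u₃ =
        π ^ (i₂ * (p : ℤ)) • ((β ^ p - β) • ξ₃) := by
      show ((β ^ p - β) * π ^ ((p : ℤ) * i₂ - i₃)) • (π ^ i₃ • ξ₃) = _
      rw [smul_smul, smul_smul]
      congr 1
      rw [mul_assoc, ← zpow_add₀ hπ0, ← e2]
      ring
    rw [h1, h2, h3, ← smul_sub]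
    congr 1
    module
  have key1 : u₁ ^ p = (π ^ (((p : ℤ) - 1) * i₁)) • u₁ -
      ((μ ^ p - μ) * π ^ ((p : ℤ) * i₁ - i₂)) • u₂ -
      (((α ^ p - α) + (μ ^ p - μ) * β) * π ^ ((p : ℤ) * i₁ - i₃)) • u₃ := by
    have e1 : i₁ * (p : ℤ) = ((p : ℤ) - 1) * i₁ + i₁ := by ring
    have e2 : i₁ * (p : ℤ) = ((p : ℤ) * i₁ - i₂) + i₂ := by ring
    have e3 : i₁ * (p : ℤ) = ((p : ℤ) * i₁ - i₃) + i₃ := by ring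
    have h1 : u₁ ^ p = π ^ (i₁ * (p : ℤ)) • (ξ₁ - (μ ^ p) • ξ₂ - (α ^ p) • ξ₃) := by
      calc u₁ ^ p = (π ^ i₁) ^ p • (ξ₁ - μ • ξ₂ - α • ξ₃) ^ p := smul_pow _ _ _
        _ = π ^ (i₁ * (p : ℤ)) • (ξ₁ - (μ ^ p) • ξ₂ - (α ^ p) • ξ₃) := by
            rw [hzp, sub_pow_char, sub_pow_char, smul_pow, smul_pow, hx1, hx2, hx3]
    have h2 : (π ^ (((p : ℤ) - 1) * i₁)) • u₁ =
        π ^ (i₁ * (p : ℤ)) • (ξ₁ - μ • ξ₂ - α • ξ₃) := by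
      show (π ^ (((p : ℤ) - 1) * i₁)) • (π ^ i₁ • (ξ₁ - μ • ξ₂ - α • ξ₃)) = _
      rw [smul_smul, ← zpow_add₀ hπ0, ← e1]
    have h3 : ((μ ^ p - μ) * π ^ ((p : ℤ) * i₁ - i₂)) • u₂ =
        π ^ (i₁ * (p : ℤ)) • ((μ ^ p - μ) • (ξ₂ - β • ξ₃)) := by
      show ((μ ^ p - μ) * π ^ ((p : ℤ) * i₁ - i₂)) • (π ^ i₂ • (ξ₂ - β • ξ₃)) = _
      rw [smul_smul, smul_smul]
      congr 1
      rw [mul_assoc, ← zpow_add₀ hπ0, ← e2]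
      ring
    have h4 : (((α ^ p - α) + (μ ^ p - μ) * β) * π ^ ((p : ℤ) * i₁ - i₃)) • u₃ =
        π ^ (i₁ * (p : ℤ)) • ((((α ^ p - α) + (μ ^ p - μ) * β)) • ξ₃) := by
      show (((α ^ p - α) + (μ ^ p - μ) * β) * π ^ ((p : ℤ) * i₁ - i₃)) • (π ^ i₃ • ξ₃) = _
      rw [smul_smul, smul_smul]
      congr 1
      rw [mul_assoc, ← zpow_add₀ hπ0, ← e3]
      ring
    rw [h1, h2, h3, h4, ← smul_sub, ← smul_sub]
    congr 1
    module
  -- translation between smul and algebraMap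
  have hsmul : ∀ (r : R) (c : K), algebraMap R K r = c →
      ∀ x : A, algebraMap R A r * x = c • x := by
    intro r c hc x
    rw [IsScalarTower.algebraMap_apply R K A, hc, ← Algebra.smul_def]
  haveI : Nontrivial R := by
    obtain ⟨r, hr⟩ := (hR 1).mpr (by rw [hν1])
    exact ⟨r, 0, fun h => one_ne_zero (α := K) (by rw [← hr, h, map_zero])⟩
  ------------------------------------------------------------------
  -- the polynomial for u₃ over R
  ------------------------------------------------------------------
  obtain ⟨hmon3, hnd3⟩ := stmt12_aux hp (Polynomial.C ra₃ * Polynomial.X : Polynomial R)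
    (Polynomial.degree_C_mul_X_le ra₃)
  have heval3 : Polynomial.aeval u₃
      (Polynomial.X ^ p - Polynomial.C ra₃ * Polynomial.X : Polynomial R) = 0 := by
    simp only [map_sub, map_mul, map_pow, Polynomial.aeval_X, Polynomial.aeval_C]
    rw [hsmul ra₃ _ hra₃, key3, sub_self]
  have hint3 : IsIntegral R u₃ :=
    ⟨_, hmon3, by rw [← Polynomial.aeval_def]; exact heval3⟩
  ------------------------------------------------------------------
  -- the polynomial for u₂ over adjoin R {u₃}
  ------------------------------------------------------------------
  have hu₃B₁ : u₃ ∈ Algebra.adjoin R ({u₃} : Set A) := Algebra.subset_adjoin rfl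
  have hwB₁ : ((β ^ p - β) * π ^ ((p : ℤ) * i₂ - i₃)) • u₃ ∈ Algebra.adjoin R ({u₃} : Set A) := by
    rw [← hrb₂, algebraMap_smul]
    exact Subalgebra.smul_mem _ hu₃B₁ rb₂
  haveI : Nontrivial (Algebra.adjoin R ({u₃} : Set A)) :=
    ⟨1, 0, fun h => one_ne_zero (α := A) (congrArg Subtype.val h)⟩
  have hdegin2 : (Polynomial.C (algebraMap R (Algebra.adjoin R ({u₃} : Set A)) ra₂) *
      Polynomial.X - Polynomial.C (⟨_, hwB₁⟩ : Algebra.adjoin R ({u₃} : Set A))).degree ≤ 1 :=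
    le_trans (Polynomial.degree_sub_le _ _)
      (max_le (Polynomial.degree_C_mul_X_le _) (le_trans Polynomial.degree_C_le zero_le_one))
  obtain ⟨hmon2, hnd2⟩ := stmt12_aux hp _ hdegin2
  have heval2 : Polynomial.aeval u₂ (Polynomial.X ^ p -
      (Polynomial.C (algebraMap R (Algebra.adjoin R ({u₃} : Set A)) ra₂) * Polynomial.X -
        Polynomial.C (⟨_, hwB₁⟩ : Algebra.adjoin R ({u₃} : Set A)))) = 0 := by
    simp only [map_sub, map_mul, map_pow, Polynomial.aeval_X, Polynomial.aeval_C]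
    rw [← IsScalarTower.algebraMap_apply R (Algebra.adjoin R ({u₃} : Set A)) A]
    rw [hsmul ra₂ _ hra₂]
    have hcv : algebraMap (Algebra.adjoin R ({u₃} : Set A)) A
        (⟨_, hwB₁⟩ : Algebra.adjoin R ({u₃} : Set A)) =
        ((β ^ p - β) * π ^ ((p : ℤ) * i₂ - i₃)) • u₃ := rfl
    rw [hcv, key2]
    abel
  haveI : Module.Finite R (Algebra.adjoin R ({u₃} : Set A)) :=
    ⟨(Subalgebra.toSubmodule (Algebra.adjoin R ({u₃} : Set A))).fg_top.mpr
      (fg_adjoin_of_finite (Set.finite_singleton _) (by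
        rintro x hx
        rw [Set.mem_singleton_iff] at hx
        subst hx
        exact hint3))⟩
  have hint2 : IsIntegral R u₂ :=
    isIntegral_trans (A := Algebra.adjoin R ({u₃} : Set A)) u₂
      ⟨_, hmon2, by rw [← Polynomial.aeval_def]; exact heval2⟩
  ------------------------------------------------------------------
  -- the polynomial for u₁ over adjoin R {u₂, u₃}
  ------------------------------------------------------------------
  have hu₂B₂ : u₂ ∈ Algebra.adjoin R ({u₂, u₃} : Set A) :=
    Algebra.subset_adjoin (Set.mem_insert _ _)
  have hu₃B₂ : u₃ ∈ Algebra.adjoin R ({u₂, u₃} : Set A) :=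
    Algebra.subset_adjoin (Set.mem_insert_of_mem _ rfl)
  have hwB₂ : ((μ ^ p - μ) * π ^ ((p : ℤ) * i₁ - i₂)) • u₂ +
      (((α ^ p - α) + (μ ^ p - μ) * β) * π ^ ((p : ℤ) * i₁ - i₃)) • u₃ ∈
      Algebra.adjoin R ({u₂, u₃} : Set A) := by
    apply add_mem
    · rw [← hrb₁, algebraMap_smul]
      exact Subalgebra.smul_mem _ hu₂B₂ rb₁
    · rw [← hrc₁, algebraMap_smul]
      exact Subalgebra.smul_mem _ hu₃B₂ rc₁
  haveI : Nontrivial (Algebra.adjoin R ({u₂, u₃} : Set A)) :=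
    ⟨1, 0, fun h => one_ne_zero (α := A) (congrArg Subtype.val h)⟩
  have hdegin1 : (Polynomial.C (algebraMap R (Algebra.adjoin R ({u₂, u₃} : Set A)) ra₁) *
      Polynomial.X - Polynomial.C (⟨_, hwB₂⟩ : Algebra.adjoin R ({u₂, u₃} : Set A))).degree ≤ 1 :=
    le_trans (Polynomial.degree_sub_le _ _)
      (max_le (Polynomial.degree_C_mul_X_le _) (le_trans Polynomial.degree_C_le zero_le_one))
  obtain ⟨hmon1, hnd1⟩ := stmt12_aux hp _ hdegin1
  have heval1 : Polynomial.aeval u₁ (Polynomial.X ^ p -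
      (Polynomial.C (algebraMap R (Algebra.adjoin R ({u₂, u₃} : Set A)) ra₁) * Polynomial.X -
        Polynomial.C (⟨_, hwB₂⟩ : Algebra.adjoin R ({u₂, u₃} : Set A)))) = 0 := by
    simp only [map_sub, map_mul, map_pow, Polynomial.aeval_X, Polynomial.aeval_C]
    rw [← IsScalarTower.algebraMap_apply R (Algebra.adjoin R ({u₂, u₃} : Set A)) A]
    rw [hsmul ra₁ _ hra₁]
    have hcv : algebraMap (Algebra.adjoin R ({u₂, u₃} : Set A)) A
        (⟨_, hwB₂⟩ : Algebra.adjoin R ({u₂, u₃} : Set A)) =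
        ((μ ^ p - μ) * π ^ ((p : ℤ) * i₁ - i₂)) • u₂ +
          (((α ^ p - α) + (μ ^ p - μ) * β) * π ^ ((p : ℤ) * i₁ - i₃)) • u₃ := rfl
    rw [hcv, key1]
    abel
  haveI : Module.Finite R (Algebra.adjoin R ({u₂, u₃} : Set A)) :=
    ⟨(Subalgebra.toSubmodule (Algebra.adjoin R ({u₂, u₃} : Set A))).fg_top.mpr
      (fg_adjoin_of_finite ((Set.finite_singleton u₃).insert u₂) (by
        intro x hx
        simp only [Set.mem_insert_iff, Set.mem_singleton_iff] at hx
        rcases hx with rfl | rfl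
        exacts [hint2, hint3]))⟩
  have hint1 : IsIntegral R u₁ :=
    isIntegral_trans (A := Algebra.adjoin R ({u₂, u₃} : Set A)) u₁
      ⟨_, hmon1, by rw [← Polynomial.aeval_def]; exact heval1⟩
  ------------------------------------------------------------------
  -- assemble
  ------------------------------------------------------------------
  refine ⟨?_, ⟨_, hmon1, hnd1, heval1⟩, ⟨_, hmon2, hnd2, heval2⟩, ⟨_, hmon3, hnd3, heval3⟩⟩
  apply fg_adjoin_of_finite
  · exact ((Set.finite_singleton u₃).insert u₂).insert u₁
  · intro x hx
    simp only [Set.mem_insert_iff, Set.mem_singleton_iff] at hx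
    rcases hx with rfl | rfl | rfl
    exacts [hint1, hint2, hint3]
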